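/- arXiv:1310.0110 — 2 statements merged into one kernel-verified Lean document; each statement's English description precedes it below -/
import Mathlib

section
/- For n a natural number and π a permutation of Fin n, the lexicographic rank of π equals the factoradic value of its Lehmer code: card{σ : permutation of Fin n | the sequence (σ(0),...,σ(n-1)) is lexicographically smaller than (π(0),...,π(n-1))} = Σ_{i : Fin n} f(i) · (n - 1 - i)!, where f(i) = card{j : Fin n | i < j ∧ π(j) < π(i)} is the Lehmer code of π. -/
open Finset

lemma card_perm_cond_zero {m : ℕ} (Q : Fin (m+1) → Prop) [DecidablePred Q] :
    Fintype.card {g : Equiv.Perm (Fin (m+1)) // Q (g 0)}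
      = Fintype.card {x : Fin (m+1) // Q x} * Nat.factorial m := by
  have key : ∀ g : Equiv.Perm (Fin (m+1)), g 0 = (Equiv.Perm.decomposeFin g).1 := by
    intro g
    conv_lhs => rw [← Equiv.Perm.decomposeFin.symm_apply_apply g]
    rw [show Equiv.Perm.decomposeFin g = ((Equiv.Perm.decomposeFin g).1, (Equiv.Perm.decomposeFin g).2) from rfl,
      Equiv.Perm.decomposeFin_symm_apply_zero]
  have e : {g : Equiv.Perm (Fin (m+1)) // Q (g 0)}
      ≃ {x : Fin (m+1) // Q x} × Equiv.Perm (Fin m) :=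
    (Equiv.subtypeEquiv Equiv.Perm.decomposeFin (fun g => by rw [key g])).trans
      Equiv.prodSubtypeFstEquivSubtypeProd
  rw [Fintype.card_congr e, Fintype.card_prod, Fintype.card_perm, Fintype.card_fin]

/-- The tail `{j : Fin n // i ≤ j}` is equivalent to `Fin (m+1)` when `n - i = m + 1`. -/
def tailEquiv (n : ℕ) (i : Fin n) (m : ℕ) (hnm : n - (i : ℕ) = m + 1) :
    {j : Fin n // i ≤ j} ≃ Fin (m+1) where
  toFun j := ⟨(j.1 : ℕ) - (i : ℕ), by
    have h1 := j.1.isLt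
    have h2 : (i : ℕ) ≤ (j.1 : ℕ) := j.2
    omega⟩
  invFun k := ⟨⟨(k : ℕ) + (i : ℕ), by have := k.isLt; omega⟩, by simp [Fin.le_def]⟩
  left_inv j := by
    have h2 : (i : ℕ) ≤ (j.1 : ℕ) := j.2
    ext
    simp [Nat.sub_add_cancel h2]
  right_inv k := by
    ext
    simp

lemma tailEquiv_symm_zero (n : ℕ) (i : Fin n) (m : ℕ) (hnm : n - (i : ℕ) = m + 1) :
    (tailEquiv n i m hnm).symm 0 = ⟨i, le_rfl⟩ := by
  apply Subtype.ext
  apply Fin.ext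
  show ((0 : Fin (m+1)) : ℕ) + (i : ℕ) = (i : ℕ)
  simp

lemma card_slice (n : ℕ) (π : Equiv.Perm (Fin n)) (i : Fin n) :
    (univ.filter (fun σ : Equiv.Perm (Fin n) =>
        (∀ j : Fin n, j < i → σ j = π j) ∧ σ i < π i)).card
      = (univ.filter (fun j : Fin n => i < j ∧ π j < π i)).card
          * Nat.factorial (n - 1 - (i : ℕ)) := by
  set m := n - 1 - (i : ℕ) with hm
  have hi : (i : ℕ) < n := i.isLt
  have hnm : n - (i : ℕ) = m + 1 := by omega
  set e3 := tailEquiv n i m hnm with he3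
  have h0 : e3.symm 0 = ⟨i, le_rfl⟩ := tailEquiv_symm_zero n i m hnm
  have E : {σ : Equiv.Perm (Fin n) // (∀ j : Fin n, j < i → σ j = π j) ∧ σ i < π i}
      ≃ {g : Equiv.Perm (Fin (m+1)) // π ((e3.symm (g 0)) : Fin n) < π i} := by
    refine (Equiv.subtypeEquiv (Equiv.mulLeft π⁻¹)
        (q := fun ρ => (∀ j : Fin n, ¬ i ≤ j → ρ j = j) ∧ π (ρ i) < π i) (fun σ => ?_)).trans
      (((Equiv.subtypeSubtypeEquivSubtypeInter _ _).symm).trans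
        (((Equiv.subtypeEquiv (Equiv.Perm.subtypeEquivSubtypePerm (fun j : Fin n => i ≤ j))
            (p := fun g => π ((g ⟨i, le_rfl⟩ : {j : Fin n // i ≤ j}) : Fin n) < π i)
            (fun g => ?_)).symm).trans
          (Equiv.subtypeEquiv (e3.permCongr) (fun g => ?_))))
    · simp only [Equiv.coe_mulLeft, Equiv.Perm.mul_apply, not_le]
      constructor
      · rintro ⟨h1, h2⟩
        refine ⟨fun j hj => ?_, ?_⟩
        · rw [h1 j hj]; exact π.symm_apply_apply j
        · rwa [Equiv.Perm.inv_def, Equiv.apply_symm_apply]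
      · rintro ⟨h1, h2⟩
        refine ⟨fun j hj => ?_, ?_⟩
        · have h3 := h1 j hj
          have h4 := congrArg π h3
          rwa [Equiv.Perm.inv_def, Equiv.apply_symm_apply] at h4
        · rwa [Equiv.Perm.inv_def, Equiv.apply_symm_apply] at h2
    · have hg : ((Equiv.Perm.subtypeEquivSubtypePerm (fun j : Fin n => i ≤ j)) g).1 i
          = g ⟨i, le_rfl⟩ :=
        Equiv.Perm.subtypeEquivSubtypePerm_apply_of_mem g (le_refl i)
      rw [hg]
    · simp only [Equiv.permCongr_apply, h0, Equiv.symm_apply_apply]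
  rw [show (univ.filter (fun σ : Equiv.Perm (Fin n) =>
        (∀ j : Fin n, j < i → σ j = π j) ∧ σ i < π i)).card
      = Fintype.card {g : Equiv.Perm (Fin (m+1)) // π ((e3.symm (g 0)) : Fin n) < π i} from
    (Fintype.card_subtype _).symm.trans (Fintype.card_congr E.symm).symm]
  rw [card_perm_cond_zero (fun x : Fin (m+1) => π ((e3.symm x : {j : Fin n // i ≤ j}) : Fin n) < π i)]
  congr 1
  have E2 : {x : Fin (m+1) // π ((e3.symm x : {j : Fin n // i ≤ j}) : Fin n) < π i}
      ≃ {j : Fin n // i ≤ j ∧ π j < π i} :=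
    (Equiv.subtypeEquiv e3.symm
      (q := fun y : {j : Fin n // i ≤ j} => π (y : Fin n) < π i) (fun x => Iff.rfl)).trans
      (Equiv.subtypeSubtypeEquivSubtypeInter (fun j : Fin n => i ≤ j) (fun j => π j < π i))
  rw [Fintype.card_congr E2, Fintype.card_subtype]
  congr 1
  apply Finset.filter_congr
  intro j _
  constructor
  · rintro ⟨h1, h2⟩
    refine ⟨lt_of_le_of_ne h1 ?_, h2⟩
    rintro rfl
    exact lt_irrefl _ h2
  · rintro ⟨h1, h2⟩
    exact ⟨le_of_lt h1, h2⟩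

/-- Step 5 of Section 3: the lexicographic rank of a permutation equals the
factoradic value of its Lehmer code. -/
theorem lex_rank_eq_factoradic (n : ℕ) (π : Equiv.Perm (Fin n)) :
    (Finset.univ.filter (fun σ : Equiv.Perm (Fin n) =>
        ∃ i : Fin n, (∀ j : Fin n, j < i → σ j = π j) ∧ σ i < π i)).card
      = ∑ i : Fin n,
          (Finset.univ.filter (fun j : Fin n => i < j ∧ π j < π i)).card
            * Nat.factorial (n - 1 - (i : ℕ)) := by
  have hset : (Finset.univ.filter (fun σ : Equiv.Perm (Fin n) =>
        ∃ i : Fin n, (∀ j : Fin n, j < i → σ j = π j) ∧ σ i < π i))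
      = Finset.univ.biUnion (fun i : Fin n =>
          Finset.univ.filter (fun σ : Equiv.Perm (Fin n) =>
            (∀ j : Fin n, j < i → σ j = π j) ∧ σ i < π i)) := by
    ext σ
    simp [mem_biUnion]
  rw [hset, card_biUnion]
  · exact Finset.sum_congr rfl (fun i _ => card_slice n π i)
  · intro i _ i' _ hne
    rw [Function.onFun, Finset.disjoint_left]
    intro σ hσ hσ'
    simp only [mem_filter] at hσ hσ'
    rcases lt_or_gt_of_ne hne with h | h
    · have h1 := hσ'.2.1 i h
      rw [h1] at hσ
      exact lt_irrefl _ hσ.2.2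
    · have h1 := hσ.2.1 i' h
      rw [h1] at hσ'
      exact lt_irrefl _ hσ'.2.2
end

section
/- Fix a natural number n, two distinct indices i, j : Fin n with i ≠ j, and values a ≤ n - 1 - i and b ≤ n - 1 - j. Then card{π : permutation of Fin n | f_π(i) = a ∧ f_π(j) = b} · (n - i) · (n - j) = n!, where f_π is the Lehmer code of π. That is, under the uniform distribution on permutations of Fin n, distinct factoradic digits are independent. -/
open Finset

section Aux

variable {n : ℕ}

lemma rank_inj {A : Finset (Fin n)} {x y : Fin n} (hx : x ∈ A) (hy : y ∈ A)
    (h : (A.filter (· < x)).card = (A.filter (· < y)).card) : x = y := by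
  by_contra hne
  wlog hlt : x < y generalizing x y
  · exact this hy hx h.symm (Ne.symm hne) (lt_of_le_of_ne (not_lt.1 hlt) (Ne.symm hne))
  have hsub : A.filter (· < x) ⊆ A.filter (· < y) :=
    Finset.monotone_filter_right A (fun z _ hz => lt_trans hz hlt)
  have hxin : x ∈ A.filter (· < y) := Finset.mem_filter.2 ⟨hx, hlt⟩
  have hxnot : x ∉ A.filter (· < x) := fun hmem => lt_irrefl x (Finset.mem_filter.1 hmem).2
  have : (A.filter (· < x)).card < (A.filter (· < y)).card :=
    Finset.card_lt_card ⟨hsub, fun hsup => hxnot (hsup hxin)⟩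
  omega

lemma lehmer_eq_rank (π : Equiv.Perm (Fin n)) (k : Fin n) :
    (Finset.univ.filter (fun l : Fin n => k < l ∧ π l < π k)).card
      = ((Finset.univ \ (Finset.univ.filter (· < k)).image π).filter (· < π k)).card := by
  have hdisj : Disjoint ((Finset.univ.filter (· < k)).image π)
      ((Finset.univ.filter (fun l => ¬ l < k)).image π) := by
    rw [Finset.disjoint_image π.injective]
    exact Finset.disjoint_filter_filter_not _ _ _
  have hunion : ((Finset.univ.filter (· < k)).image π) ∪
      ((Finset.univ.filter (fun l => ¬ l < k)).image π) = Finset.univ := by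
    rw [← Finset.image_union, Finset.filter_union_filter_not_eq]
    exact Finset.image_univ_equiv π
  have hA : Finset.univ \ (Finset.univ.filter (· < k)).image π
      = (Finset.univ.filter (fun l => ¬ l < k)).image π := by
    nth_rewrite 1 [← hunion]
    exact Finset.union_sdiff_cancel_left hdisj
  rw [hA, Finset.filter_image, Finset.card_image_of_injective _ π.injective,
    Finset.filter_filter]
  congr 1
  apply Finset.filter_congr
  intro l _
  simp only [not_lt]
  constructor
  · rintro ⟨h1, h2⟩; exact ⟨le_of_lt h1, h2⟩
  · rintro ⟨h1, h2⟩
    refine ⟨lt_of_le_of_ne h1 ?_, h2⟩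
    rintro rfl; exact lt_irrefl _ h2

lemma lehmer_injective :
    Function.Injective (fun π : Equiv.Perm (Fin n) =>
      fun k : Fin n => (Finset.univ.filter (fun l : Fin n => k < l ∧ π l < π k)).card) := by
  intro π σ hf
  simp only [funext_iff] at hf
  have key : ∀ m : ℕ, ∀ k : Fin n, (k : ℕ) = m → π k = σ k := by
    intro m
    induction m using Nat.strong_induction_on with
    | _ m IH =>
      intro k hk
      have hIH : ∀ l : Fin n, l < k → π l = σ l := by
        intro l hl
        have hl' : (l : ℕ) < (k : ℕ) := hl
        exact IH (l : ℕ) (by omega) l rfl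
      have hIm : (Finset.univ.filter (· < k)).image π = (Finset.univ.filter (· < k)).image σ :=
        Finset.image_congr (fun l hl => hIH l (Finset.mem_filter.1 hl).2)
      set A := Finset.univ \ (Finset.univ.filter (· < k)).image π with hAdef
      have hπA : π k ∈ A := by
        rw [hAdef, Finset.mem_sdiff]
        refine ⟨Finset.mem_univ _, ?_⟩
        intro hmem
        obtain ⟨l, hl, hlk⟩ := Finset.mem_image.1 hmem
        have : l = k := π.injective hlk
        subst this
        exact absurd (Finset.mem_filter.1 hl).2 (lt_irrefl l)
      have hσA : σ k ∈ A := by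
        rw [hAdef, hIm, Finset.mem_sdiff]
        refine ⟨Finset.mem_univ _, ?_⟩
        intro hmem
        obtain ⟨l, hl, hlk⟩ := Finset.mem_image.1 hmem
        have : l = k := σ.injective hlk
        subst this
        exact absurd (Finset.mem_filter.1 hl).2 (lt_irrefl l)
      apply rank_inj hπA hσA
      have h1 := lehmer_eq_rank π k
      have h2 := lehmer_eq_rank σ k
      rw [← hAdef] at h1
      rw [← hIm, ← hAdef] at h2
      rw [← h1, ← h2]
      exact hf k
  exact Equiv.ext fun k => key (k : ℕ) k rfl

end Aux

section Main

lemma prod_sub_eq_factorial (n : ℕ) : ∏ k : Fin n, (n - (k : ℕ)) = n.factorial := by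
  rw [Fin.prod_univ_eq_prod_range, ← Finset.prod_range_reflect,
    ← Finset.prod_range_add_one_eq_factorial n]
  apply Finset.prod_congr rfl
  intro k hk
  simp only [Finset.mem_range] at hk
  omega

/-- The Lehmer code as a map into the product of ranges. -/
def lehmerMap (n : ℕ) (π : Equiv.Perm (Fin n)) (k : Fin n) : Fin (n - (k : ℕ)) :=
  ⟨(Finset.univ.filter (fun l : Fin n => k < l ∧ π l < π k)).card, by
    have h1 : (Finset.univ.filter (fun l : Fin n => k < l ∧ π l < π k)).card
        ≤ (Finset.Ioi k).card := by
      apply Finset.card_le_card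
      intro l hl
      simp only [Finset.mem_filter, Finset.mem_Ioi] at hl ⊢
      exact hl.2.1
    rw [Fin.card_Ioi] at h1
    have := k.isLt
    omega⟩

lemma lehmerMap_bijective (n : ℕ) : Function.Bijective (lehmerMap n) := by
  rw [Fintype.bijective_iff_injective_and_card]
  constructor
  · intro π σ h
    apply lehmer_injective
    funext k
    have := congrFun h k
    exact congrArg Fin.val this
  · rw [Fintype.card_perm, Fintype.card_pi]
    simp only [Fintype.card_fin, Fintype.card_fin]
    rw [prod_sub_eq_factorial]

end Main

/-- Step 5 of Section 3: distinct factoradic digits are independent under the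
uniform distribution on permutations:
card{π | f_π(i) = a ∧ f_π(j) = b} · (n - i) · (n - j) = n!. -/
theorem lehmer_digits_independent (n : ℕ) (i j : Fin n) (hij : i ≠ j)
    (a b : ℕ) (ha : a ≤ n - 1 - (i : ℕ)) (hb : b ≤ n - 1 - (j : ℕ)) :
    (Finset.univ.filter (fun π : Equiv.Perm (Fin n) =>
        (Finset.univ.filter (fun l : Fin n => i < l ∧ π l < π i)).card = a
          ∧ (Finset.univ.filter (fun l : Fin n => j < l ∧ π l < π j)).card = b)).card
      * (n - (i : ℕ)) * (n - (j : ℕ)) = Nat.factorial n := by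
  classical
  have hi := i.isLt
  have hj := j.isLt
  have ha' : a < n - (i : ℕ) := by omega
  have hb' : b < n - (j : ℕ) := by omega
  set e : Equiv.Perm (Fin n) ≃ (∀ k : Fin n, Fin (n - (k : ℕ))) :=
    Equiv.ofBijective (lehmerMap n) (lehmerMap_bijective n) with he
  set Q : (∀ k : Fin n, Fin (n - (k : ℕ))) → Prop :=
    fun g => ((g i : ℕ) = a ∧ (g j : ℕ) = b) with hQ
  -- transport the count along e
  have hstep1 : (Finset.univ.filter (fun π : Equiv.Perm (Fin n) =>
        (Finset.univ.filter (fun l : Fin n => i < l ∧ π l < π i)).card = a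
          ∧ (Finset.univ.filter (fun l : Fin n => j < l ∧ π l < π j)).card = b))
      = Finset.univ.filter (fun π => Q (e π)) := by
    apply Finset.filter_congr
    intro π _
    rfl
  have hstep2 : Finset.univ.filter (fun π => Q (e π))
      = (Finset.univ.filter Q).map e.symm.toEmbedding := by
    ext π
    simp only [Finset.mem_filter, Finset.mem_univ, true_and, Finset.mem_map,
      Equiv.coe_toEmbedding, Equiv.symm_apply_eq]
    constructor
    · intro h; exact ⟨e π, h, rfl⟩
    · rintro ⟨g, hg, rfl⟩; exact hg
  -- count the codes
  set t : ∀ k : Fin n, Finset (Fin (n - (k : ℕ))) :=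
    fun k => Finset.univ.filter
      (fun x => (k = i → (x : ℕ) = a) ∧ (k = j → (x : ℕ) = b)) with ht
  have hpi : Finset.univ.filter Q = Fintype.piFinset t := by
    ext g
    simp only [Finset.mem_filter, Finset.mem_univ, true_and, Fintype.mem_piFinset, ht, hQ]
    constructor
    · rintro ⟨h1, h2⟩ k
      exact ⟨fun hk => by subst hk; exact h1, fun hk => by subst hk; exact h2⟩
    · intro h
      exact ⟨(h i).1 rfl, (h j).2 rfl⟩
  have hcards : ∀ k : Fin n, (t k).card = if k = i ∨ k = j then 1 else n - (k : ℕ) := by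
    intro k
    by_cases hki : k = i
    · subst hki
      rw [if_pos (Or.inl rfl)]
      have : t k = {(⟨a, ha'⟩ : Fin (n - (k : ℕ)))} := by
        ext x
        simp only [ht, Finset.mem_filter, Finset.mem_univ, true_and, Finset.mem_singleton]
        constructor
        · rintro ⟨h1, _⟩; exact Fin.ext (h1 trivial)
        · rintro rfl; exact ⟨fun _ => rfl, fun hk => absurd hk hij⟩
      rw [this, Finset.card_singleton]
    · by_cases hkj : k = j
      · subst hkj
        rw [if_pos (Or.inr rfl)]
        have : t k = {(⟨b, hb'⟩ : Fin (n - (k : ℕ)))} := by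
          ext x
          simp only [ht, Finset.mem_filter, Finset.mem_univ, true_and, Finset.mem_singleton]
          constructor
          · rintro ⟨_, h2⟩; exact Fin.ext (h2 trivial)
          · rintro rfl; exact ⟨fun hk => absurd hk hki, fun _ => rfl⟩
        rw [this, Finset.card_singleton]
      · rw [if_neg (by tauto)]
        have : t k = Finset.univ := by
          ext x
          simp only [ht, Finset.mem_filter, Finset.mem_univ, true_and, iff_true]
          exact ⟨fun hk => absurd hk hki, fun hk => absurd hk hkj⟩
        rw [this, Finset.card_univ, Fintype.card_fin]
  have hcount : (Finset.univ.filter Q).card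
      = ∏ k : Fin n, (if k = i ∨ k = j then 1 else n - (k : ℕ)) := by
    rw [hpi, Fintype.card_piFinset]
    exact Finset.prod_congr rfl (fun k _ => hcards k)
  -- split the product
  have hsplit : (∏ k : Fin n, (if k = i ∨ k = j then 1 else n - (k : ℕ)))
      * ((n - (i : ℕ)) * (n - (j : ℕ))) = ∏ k : Fin n, (n - (k : ℕ)) := by
    have hfil : Finset.univ.filter (fun k : Fin n => k = i ∨ k = j) = {i, j} := by
      ext k; simp [Finset.mem_insert]
    calc (∏ k : Fin n, (if k = i ∨ k = j then 1 else n - (k : ℕ)))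
          * ((n - (i : ℕ)) * (n - (j : ℕ)))
        = ((∏ k ∈ Finset.univ.filter (fun k : Fin n => k = i ∨ k = j),
              (if k = i ∨ k = j then 1 else n - (k : ℕ)))
          * ∏ k ∈ Finset.univ.filter (fun k : Fin n => ¬(k = i ∨ k = j)),
              (if k = i ∨ k = j then 1 else n - (k : ℕ)))
          * ((n - (i : ℕ)) * (n - (j : ℕ))) := by
          rw [Finset.prod_filter_mul_prod_filter_not]
      _ = (∏ k ∈ Finset.univ.filter (fun k : Fin n => ¬(k = i ∨ k = j)), (n - (k : ℕ)))
          * ((n - (i : ℕ)) * (n - (j : ℕ))) := by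
          rw [Finset.prod_eq_one (fun k hk => if_pos (Finset.mem_filter.1 hk).2), one_mul]
          congr 1
          exact Finset.prod_congr rfl (fun k hk => if_neg (Finset.mem_filter.1 hk).2)
      _ = (∏ k ∈ Finset.univ.filter (fun k : Fin n => ¬(k = i ∨ k = j)), (n - (k : ℕ)))
          * (∏ k ∈ Finset.univ.filter (fun k : Fin n => k = i ∨ k = j), (n - (k : ℕ))) := by
          rw [hfil, Finset.prod_pair hij]
      _ = ∏ k : Fin n, (n - (k : ℕ)) := by
          rw [mul_comm, Finset.prod_filter_mul_prod_filter_not]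
  rw [hstep1, hstep2, Finset.card_map, hcount, mul_assoc, hsplit, prod_sub_eq_factorial]
end
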